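/- Consider the flow φ on the torus T² = (ℝ/ℤ)² defined by φ(t, (x,y)) = (x + π(αt), y + π(t)) for a fixed irrational α. For the orbit f of any point, the exponent group E_f equals the subgroup of ℝ generated by α and 1, i.e., E_f = ℤα + ℤ. -/

import Mathlib

open Filter Topology

noncomputable def expGroup {X : Type*} [MetricSpace X] (f : ℝ → X) : Set ℝ :=
  {α : ℝ | ∀ t : ℕ → ℝ, (∃ x : X, Tendsto (fun i => f (t i)) atTop (nhds x)) →
      ∃ ξ : UnitAddCircle, Tendsto (fun i => ((α * t i : ℝ) : UnitAddCircle)) atTop (nhds ξ)}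

namespace ExpAux

open Set

noncomputable def nd (x : ℝ) : ℝ := |x - round x|

lemma nd_nonneg (x : ℝ) : 0 ≤ nd x := abs_nonneg _
lemma nd_le (x : ℝ) (z : ℤ) : nd x ≤ |x - z| := round_le x z
lemma nd_le_half (x : ℝ) : nd x ≤ 1 / 2 := abs_sub_round x
lemma nd_int (z : ℤ) : nd (z : ℝ) = 0 := by simp [nd]
lemma nd_zero : nd 0 = 0 := by simpa using nd_int 0

lemma nd_add_int (x : ℝ) (z : ℤ) : nd (x + z) = nd x := by
  unfold nd
  rw [round_add_intCast]
  push_cast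
  congr 1
  ring

lemma nd_sub_int (x : ℝ) (z : ℤ) : nd (x - z) = nd x := by
  simpa [sub_eq_add_neg] using nd_add_int x (-z)

lemma nd_int_add (x : ℝ) (z : ℤ) : nd (z + x) = nd x := by
  rw [add_comm]; exact nd_add_int x z

lemma nd_add_le (x y : ℝ) : nd (x + y) ≤ nd x + nd y := by
  refine (nd_le (x + y) (round x + round y)).trans ?_
  have h : x + y - ((round x + round y : ℤ) : ℝ) = (x - round x) + (y - round y) := by
    push_cast; ring
  rw [h]
  exact (abs_add_le _ _).trans (by rfl)

lemma nd_eq_abs {x : ℝ} (h : |x| < 1 / 2) : nd x = |x| := by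
  have h' := abs_lt.1 h
  have hr : round x = 0 := round_eq_zero_iff.2 ⟨by linarith, by linarith⟩
  simp [nd, hr]

lemma nd_eq_zero_iff {x : ℝ} : nd x = 0 ↔ ∃ z : ℤ, x = (z : ℝ) := by
  constructor
  · intro h
    exact ⟨round x, by have := abs_eq_zero.1 h; linarith⟩
  · rintro ⟨z, rfl⟩; exact nd_int z

lemma nd_nsmul (n : ℕ) (x : ℝ) : nd ((n : ℝ) * x) ≤ (n : ℝ) * nd x := by
  induction n with
  | zero => simp [nd_zero]
  | succ k ih =>
    have h : ((k + 1 : ℕ) : ℝ) * x = (k : ℝ) * x + x := by push_cast; ring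
    rw [h]
    refine (nd_add_le _ _).trans ?_
    push_cast
    linarith

lemma norm_coe (x : ℝ) : ‖(x : UnitAddCircle)‖ = nd x := UnitAddCircle.norm_eq

lemma tendsto_coe_iff {u : ℕ → ℝ} :
    Tendsto (fun i => ((u i : ℝ) : UnitAddCircle)) atTop (𝓝 0) ↔
      Tendsto (fun i => nd (u i)) atTop (𝓝 0) := by
  rw [tendsto_zero_iff_norm_tendsto_zero]
  simp only [norm_coe]


lemma dense_pair {α : ℝ} (hα : Irrational α) (lo hi : ℝ) (h : lo < hi) :
    ∃ a b : ℤ, (a : ℝ) * α + b ∈ Set.Ioo lo hi := by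
  set S : AddSubgroup ℝ := AddSubgroup.closure {α, 1} with hS
  have hd : Dense (S : Set ℝ) := by
    rcases S.dense_or_cyclic with hd | ⟨x, hx⟩
    · exact hd
    · exfalso
      have hαS : α ∈ S := AddSubgroup.subset_closure (by simp)
      have h1S : (1 : ℝ) ∈ S := AddSubgroup.subset_closure (by simp)
      rw [hx] at hαS h1S
      rw [AddSubgroup.mem_closure_singleton] at hαS h1S
      obtain ⟨n, hn⟩ := hαS
      obtain ⟨k, hk⟩ := h1S
      have hk0 : (k : ℝ) ≠ 0 := by
        intro h0
        rw [zsmul_eq_mul] at hk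
        rw [h0, zero_mul] at hk
        norm_num at hk
      refine hα ⟨(n : ℚ) / (k : ℚ), ?_⟩
      rw [zsmul_eq_mul] at hn hk
      have hx0 : x = 1 / k := by field_simp at hk ⊢; linarith
      push_cast
      rw [← hn, hx0]
      have : (k : ℝ) ≠ 0 := hk0
      field_simp
  obtain ⟨y, hy⟩ := dense_iff_inter_open.mp hd (Set.Ioo lo hi) isOpen_Ioo
    ⟨(lo + hi) / 2, by constructor <;> linarith⟩
  obtain ⟨hyI, hyS⟩ := hy
  rw [SetLike.mem_coe, AddSubgroup.mem_closure_pair] at hyS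
  obtain ⟨a, b, hab⟩ := hyS
  refine ⟨a, b, ?_⟩
  rw [zsmul_eq_mul, zsmul_eq_mul, mul_one] at hab
  rw [hab]
  exact hyI

lemma exists_int_between {r : ℝ} (hr : 2 ≤ r) :
    ∃ X : ℤ, 0 < (X:ℝ) ∧ (X:ℝ) ≤ r ∧ r/2 ≤ (X:ℝ) := by
  refine ⟨⌊r⌋, ?_, Int.floor_le r, ?_⟩
  · have : (1:ℤ) ≤ ⌊r⌋ := by
      rw [Int.le_floor]; exact_mod_cast le_trans (by norm_num) hr
    exact_mod_cast lt_of_lt_of_le (by norm_num) this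
  · have := Int.sub_one_lt_floor r
    linarith


lemma exch {C δ g g' ea ea' : ℝ}
    (hC : 0 < C) (hCδ : C * δ = 1/16)
    (hηa : |ea| ≤ C * |g|) (hηa' : |ea'| ≤ C * |g'|)
    (hcore : ∀ x y : ℤ, |(x:ℝ) * g + (y:ℝ) * g'| ≤ δ → |(x:ℝ) * ea + (y:ℝ) * ea'| < 1/2 →
      |(x:ℝ) * ea + (y:ℝ) * ea'| ≤ C * |(x:ℝ) * g + (y:ℝ) * g'|)
    (hg0 : 0 < |g|) (hgδ : |g| < δ) (hg'0 : 0 < |g'|) (hg'δ : |g'| < δ) :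
    |ea - (g / g') * ea'| ≤ 16 * C^2 * |g| * |g'| := by
  have hδ : 0 < δ := by nlinarith
  have hg'ne : g' ≠ 0 := abs_pos.1 hg'0
  have hgne : g ≠ 0 := abs_pos.1 hg0
  have hCg : C * |g| < 1/16 := by nlinarith
  have hCg' : C * |g'| < 1/16 := by nlinarith
  have hXf : (2:ℝ) ≤ 1 / (8 * C * |g|) := by
    rw [le_div_iff₀ (by positivity)]
    linarith
  obtain ⟨X, hXpos, hXle, hXlow0⟩ := exists_int_between hXf
  have hXlow : 1/(16*C*|g|) ≤ (X:ℝ) := by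
    have he : (1:ℝ)/(8*C*|g|) / 2 = 1/(16*C*|g|) := by ring
    linarith
  set y : ℤ := -round ((X:ℝ) * g / g') with hydef
  have hsum : |(X:ℝ) * g + (y:ℝ) * g'| ≤ |g'| / 2 := by
    have he : (X:ℝ) * g + (y:ℝ) * g' = g' * ((X:ℝ) * g / g' - round ((X:ℝ) * g / g')) := by
      rw [hydef]; push_cast; field_simp; ring
    rw [he, abs_mul]
    calc |g'| * |(X:ℝ) * g / g' - round ((X:ℝ) * g / g')| ≤ |g'| * (1/2) :=
          mul_le_mul_of_nonneg_left (abs_sub_round _) (abs_nonneg _)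
      _ = |g'|/2 := by ring
  have hyabs : |(y:ℝ)| ≤ |(X:ℝ) * g / g'| + 1/2 := by
    have h1 : ((round ((X:ℝ) * g / g') : ℤ) : ℝ) =
        (X:ℝ) * g / g' - ((X:ℝ) * g / g' - round ((X:ℝ) * g / g')) := by ring
    have h2 : |((round ((X:ℝ) * g / g') : ℤ) : ℝ)| ≤ |(X:ℝ) * g / g'| + 1/2 := by
      rw [h1]
      calc |(X:ℝ) * g / g' - ((X:ℝ) * g / g' - (round ((X:ℝ) * g / g'):ℝ))|
          ≤ |(X:ℝ) * g / g'| + |(X:ℝ) * g / g' - (round ((X:ℝ) * g / g'):ℝ)| := abs_sub _ _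
        _ ≤ |(X:ℝ) * g / g'| + 1/2 := by linarith [abs_sub_round ((X:ℝ) * g / g')]
    rw [hydef]; push_cast; rw [abs_neg]; exact h2
  have hqabs : |(X:ℝ) * g / g'| = (X:ℝ) * |g| / |g'| := by
    rw [abs_div, abs_mul, abs_of_pos hXpos]
  have hXg : (X:ℝ) * |g| ≤ 1/(8*C) := by
    calc (X:ℝ) * |g| ≤ (1/(8*C*|g|)) * |g| := mul_le_mul_of_nonneg_right hXle (abs_nonneg g)
      _ = 1/(8*C) := by field_simp
  have hsmall : |(X:ℝ) * ea + (y:ℝ) * ea'| < 1/2 := by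
    have hb : |(X:ℝ) * ea + (y:ℝ) * ea'| ≤ (X:ℝ) * |ea| + |(y:ℝ)| * |ea'| := by
      calc |(X:ℝ) * ea + (y:ℝ) * ea'| ≤ |(X:ℝ) * ea| + |(y:ℝ) * ea'| := abs_add_le _ _
        _ = (X:ℝ) * |ea| + |(y:ℝ)| * |ea'| := by
            rw [abs_mul, abs_mul, abs_of_pos hXpos]
    have hy' : |(y:ℝ)| * |ea'| ≤ ((X:ℝ) * |g| / |g'| + 1/2) * (C * |g'|) := by
      apply mul_le_mul _ hηa' (abs_nonneg _) (by positivity)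
      rw [← hqabs]; exact hyabs
    have hyg : ((X:ℝ) * |g| / |g'| + 1/2) * (C * |g'|) = C * ((X:ℝ) * |g|) + C * |g'|/2 := by
      field_simp
    have hXη : (X:ℝ) * |ea| ≤ C * ((X:ℝ) * |g|) := by
      calc (X:ℝ) * |ea| ≤ (X:ℝ) * (C * |g|) := mul_le_mul_of_nonneg_left hηa hXpos.le
        _ = C * ((X:ℝ) * |g|) := by ring
    have hfin : (X:ℝ) * |ea| + |(y:ℝ)| * |ea'| ≤ 2 * C * ((X:ℝ) * |g|) + C * |g'|/2 := by
      rw [hyg] at hy'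
      linarith
    have h8 : 2 * C * ((X:ℝ) * |g|) ≤ 1/4 := by
      calc 2 * C * ((X:ℝ) * |g|) ≤ 2 * C * (1/(8*C)) := by
            apply mul_le_mul_of_nonneg_left hXg (by positivity)
        _ = 1/4 := by field_simp; ring
    linarith
  have hres := hcore X y (hsum.trans (by linarith)) hsmall
  have hres2 : |(X:ℝ) * ea + (y:ℝ) * ea'| ≤ C * (|g'|/2) := by
    refine hres.trans ?_
    exact mul_le_mul_of_nonneg_left hsum hC.le
  have hid : ea - (g/g') * ea' =
      (((X:ℝ) * ea + (y:ℝ) * ea') - ea' * (((X:ℝ) * g + (y:ℝ) * g')/g')) / (X:ℝ) := by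
    have hXne : (X:ℝ) ≠ 0 := ne_of_gt hXpos
    field_simp
    ring
  rw [hid, abs_div, abs_of_pos hXpos, div_le_iff₀ hXpos]
  have hq2 : |(X:ℝ) * g + (y:ℝ) * g'| / |g'| ≤ 1/2 := by
    rw [div_le_iff₀ (abs_pos.2 hg'ne)]
    linarith [hsum]
  have hB : |ea' * (((X:ℝ) * g + (y:ℝ) * g')/g')| ≤ C * (|g'|/2) := by
    rw [abs_mul, abs_div]
    calc |ea'| * (|(X:ℝ) * g + (y:ℝ) * g'| / |g'|) ≤ (C * |g'|) * (1/2) :=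
          mul_le_mul hηa' hq2 (by positivity) (by positivity)
      _ = C * (|g'|/2) := by ring
  have hnum : |((X:ℝ) * ea + (y:ℝ) * ea') - ea' * (((X:ℝ) * g + (y:ℝ) * g')/g')| ≤ C * |g'| := by
    calc |((X:ℝ) * ea + (y:ℝ) * ea') - ea' * (((X:ℝ) * g + (y:ℝ) * g')/g')|
        ≤ |(X:ℝ) * ea + (y:ℝ) * ea'| + |ea' * (((X:ℝ) * g + (y:ℝ) * g')/g')| := abs_sub _ _
      _ ≤ C * (|g'|/2) + C * (|g'|/2) := add_le_add hres2 hB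
      _ = C * |g'| := by ring
  refine hnum.trans ?_
  have h16 : 1 ≤ 16*C*|g| * (X:ℝ) := by
    rw [div_le_iff₀ (by positivity)] at hXlow
    linarith
  have hpos2 : 0 < C * |g'| := by positivity
  nlinarith [hpos2, h16]

set_option maxHeartbeats 3200000 in
lemma hard (α β : ℝ) (hα : Irrational α)
    (hP : ∀ ε : ℝ, 0 < ε → ∃ δ : ℝ, 0 < δ ∧
      ∀ s : ℝ, nd s < δ → nd (α * s) < δ → nd (β * s) < ε) :
    ∃ m n : ℤ, β = m * α + n := by
  -- Step 0: a δ₁ ≤ 1/4 for ε = 1/16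
  obtain ⟨δ₀, hδ₀, h₀⟩ := hP (1/16) (by norm_num)
  set δ₁ : ℝ := min δ₀ (1/4) with hδ₁def
  have hδ₁ : 0 < δ₁ := lt_min hδ₀ (by norm_num)
  have hδ₁le : δ₁ ≤ 1/4 := min_le_right _ _
  have h₁ : ∀ s : ℝ, nd s < δ₁ → nd (α * s) < δ₁ → nd (β * s) < 1/16 := by
    intro s hs has
    exact h₀ s (lt_of_lt_of_le hs (min_le_left _ _)) (lt_of_lt_of_le has (min_le_left _ _))
  -- Step Q: iteration
  have hQ : ∀ k : ℕ, 1 ≤ k → ∀ s : ℝ, nd s < δ₁ / k → nd (α * s) < δ₁ / k →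
      nd (β * s) < 1 / (16 * k) := by
    intro k hk s hs has
    have hkR : (1 : ℝ) ≤ (k : ℝ) := by exact_mod_cast hk
    have hkpos : (0 : ℝ) < k := by linarith
    -- all multiples j ≤ k stay small
    have hmul : ∀ j : ℕ, 1 ≤ j → (j : ℝ) ≤ (k : ℝ) → nd ((j:ℝ) * s) < δ₁ ∧ nd (α * ((j:ℝ) * s)) < δ₁ := by
      intro j hj hjk
      have hjR : (1:ℝ) ≤ (j:ℝ) := by exact_mod_cast hj
      constructor
      · refine lt_of_le_of_lt (nd_nsmul j s) ?_
        calc (j:ℝ) * nd s < (j:ℝ) * (δ₁ / k) := by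
              apply mul_lt_mul_of_pos_left hs; linarith
          _ ≤ (k:ℝ) * (δ₁ / k) := by
              apply mul_le_mul_of_nonneg_right hjk; positivity
          _ = δ₁ := by field_simp
      · have hre : α * ((j:ℝ) * s) = (j:ℝ) * (α * s) := by ring
        rw [hre]
        refine lt_of_le_of_lt (nd_nsmul j (α * s)) ?_
        calc (j:ℝ) * nd (α * s) < (j:ℝ) * (δ₁ / k) := by
              apply mul_lt_mul_of_pos_left has; linarith
          _ ≤ (k:ℝ) * (δ₁ / k) := by
              apply mul_le_mul_of_nonneg_right hjk; positivity
          _ = δ₁ := by field_simp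
    set F : ℕ → ℝ := fun j => β * ((j:ℝ) * s) - round (β * ((j:ℝ) * s)) with hF
    have hFabs : ∀ j : ℕ, 1 ≤ j → (j:ℝ) ≤ (k:ℝ) → |F j| < 1/16 := by
      intro j hj hjk
      obtain ⟨hA, hB⟩ := hmul j hj hjk
      exact h₁ ((j:ℝ) * s) hA hB
    have hkey : ∀ j : ℕ, 1 ≤ j → j ≤ k → F j = (j : ℝ) * F 1 := by
      intro j hj hjk
      induction j with
      | zero => omega
      | succ i ih =>
        rcases Nat.eq_or_lt_of_le hj with h1 | h2
        · rw [← h1]; simp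
        · have hi1 : 1 ≤ i := by omega
          have hik : i ≤ k := by omega
          have hih := ih hi1 hik
          -- F (i+1) - F i - F 1 is an integer with small abs
          set z : ℤ := round (β * ((i:ℝ) * s)) + round (β * ((1:ℕ):ℝ) * s) - round (β * (((i+1:ℕ)):ℝ) * s) with hz
          have hcast : F (i+1) - F i - F 1 = (z : ℝ) := by
            simp only [hF, hz]
            push_cast
            ring
          have habs : |F (i+1) - F i - F 1| < 1 := by
            have e1 := hFabs (i+1) (by omega) (by exact_mod_cast hjk)
            have e2 := hFabs i hi1 (by exact_mod_cast Nat.cast_le.mpr hik)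
            have e3 := hFabs 1 le_rfl (by exact_mod_cast hk)
            have := abs_sub_abs_le_abs_sub (F (i+1)) (F i)
            calc |F (i+1) - F i - F 1| ≤ |F (i+1)| + |F i| + |F 1| := by
                  have := abs_add_le (F (i+1) - F i) (-(F 1))
                  have h2 := abs_add_le (F (i+1)) (-(F i))
                  simp only [abs_neg] at this h2
                  calc |F (i+1) - F i - F 1| = |(F (i+1) + -(F i)) + -(F 1)| := by ring_nf
                    _ ≤ |F (i+1) + -(F i)| + |F 1| := by simpa using abs_add_le (F (i+1) + -(F i)) (-(F 1))
                    _ ≤ |F (i+1)| + |F i| + |F 1| := by simpa using h2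
              _ < 1 := by linarith
          have hz0 : z = 0 := by
            have : |(z:ℝ)| < 1 := hcast ▸ habs
            have h2 : |z| < 1 := by exact_mod_cast this
            rw [abs_lt] at h2
            omega
          have : F (i+1) - F i - F 1 = 0 := by rw [hcast, hz0]; simp
          have : F (i+1) = F i + F 1 := by linarith
          rw [this, hih]
          push_cast
          ring
    have hk1 : F k = (k:ℝ) * F 1 := hkey k hk le_rfl
    have hFk : |F k| < 1/16 := hFabs k hk le_rfl
    have hF1 : nd (β * s) = |F 1| := by
      simp only [hF, nd]
      norm_num
    rw [hF1]
    rw [hk1, abs_mul, abs_of_pos hkpos] at hFk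
    rw [lt_div_iff₀ (by positivity)]
    calc |F 1| * (16 * k) = 16 * ((k:ℝ) * |F 1|) := by ring
      _ < 16 * (1/16) := by linarith
      _ = 1 := by norm_num
  -- Step L : Lipschitz bound at 0
  set δ : ℝ := δ₁ / 4 with hδdef
  set C : ℝ := 1 / (4 * δ₁) with hCdef
  have hδ : 0 < δ := by positivity
  have hC : 0 < C := by positivity
  have hCδ : C * δ = 1 / 16 := by
    rw [hδdef, hCdef]; field_simp; ring
  have hδle : δ ≤ 1 / 16 := by rw [hδdef]; linarith
  have hC1 : 1 ≤ C := by
    rw [hCdef, le_div_iff₀ (by positivity)]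
    linarith
  have hL : ∀ s : ℝ, nd s ≤ δ → nd (α * s) ≤ δ →
      nd (β * s) ≤ C * max (nd s) (nd (α * s)) := by
    intro s hs has
    set r : ℝ := max (nd s) (nd (α * s)) with hrdef
    have hr0 : 0 ≤ r := le_trans (nd_nonneg s) (le_max_left _ _)
    rcases eq_or_lt_of_le hr0 with h0 | hpos
    · -- r = 0 : then s is an integer and α * s is an integer, so s = 0
      have hnds : nd s = 0 :=
        le_antisymm (h0 ▸ le_max_left _ _) (nd_nonneg s)
      have hndas : nd (α * s) = 0 :=
        le_antisymm (h0 ▸ le_max_right _ _) (nd_nonneg _)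
      obtain ⟨z, hz⟩ := nd_eq_zero_iff.1 hnds
      obtain ⟨w, hw⟩ := nd_eq_zero_iff.1 hndas
      have hz0 : z = 0 := by
        by_contra hzz
        refine hα ⟨(w : ℚ) / (z : ℚ), ?_⟩
        have hzR : (z : ℝ) ≠ 0 := by exact_mod_cast hzz
        push_cast
        field_simp
        rw [hz] at hw
        linarith [hw]
      have hs0 : s = 0 := by rw [hz, hz0]; simp
      rw [hs0, mul_zero, nd_zero, ← h0, mul_zero]
    · -- 0 < r
      have hrδ : r ≤ δ := max_le hs has
      set k : ℕ := ⌊δ₁ / (2 * r)⌋₊ with hkdef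
      have h2r : 2 ≤ δ₁ / (2 * r) := by
        rw [le_div_iff₀ (by positivity)]
        rw [hδdef] at hrδ
        linarith
      have hk1 : 1 ≤ k := Nat.le_floor (by exact_mod_cast le_trans (by norm_num) h2r)
      have hkle : (k : ℝ) ≤ δ₁ / (2 * r) := Nat.floor_le (by positivity)
      have hkR : (1:ℝ) ≤ (k:ℝ) := by exact_mod_cast hk1
      have hkpos : (0:ℝ) < k := by linarith
      have hklow : δ₁ / (4 * r) ≤ (k : ℝ) := by
        have h1 := Nat.sub_one_lt_floor (δ₁ / (2 * r))
        have h4 : 1 ≤ δ₁ / (4 * r) := by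
          rw [le_div_iff₀ (by positivity)]
          rw [le_div_iff₀ (by positivity)] at h2r
          linarith
        have he : δ₁ / (4 * r) = δ₁ / (2 * r) / 2 := by ring
        rw [← hkdef] at h1
        nlinarith [h1]
      have hrk : r < δ₁ / k := by
        rw [lt_div_iff₀ hkpos, hrdef]
        rw [le_div_iff₀ (by positivity)] at hkle
        -- k * (2r) ≤ δ₁ and r > 0 so r * k < δ₁
        nlinarith
      have hnds : nd s < δ₁ / k := lt_of_le_of_lt (le_max_left _ _) hrk
      have hndas : nd (α * s) < δ₁ / k := lt_of_le_of_lt (le_max_right _ _) hrk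
      have hql := hQ k hk1 s hnds hndas
      refine le_trans hql.le ?_
      -- 1/(16 k) ≤ C * r  ⟺  4 δ₁ ≤ 16 k r  ⟸  δ₁ ≤ 4 k r (hklow)
      rw [div_le_iff₀ (by positivity)] at hklow
      rw [hCdef]
      rw [div_le_iff₀ (by positivity)]
      nlinarith
  -- the fractional part of β * a for integer a
  obtain ⟨η, hηdef⟩ : ∃ η : ℤ → ℝ, η = fun a : ℤ => β * a - round (β * (a:ℝ)) := ⟨_, rfl⟩
  have hnd_eta : ∀ a : ℤ, nd (β * (a:ℝ)) = |η a| := fun a => by rw [hηdef]; rfl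
  have hEta : ∀ a b : ℤ, |(a:ℝ) * α + b| < δ → |η a| ≤ C * |(a:ℝ) * α + b| := by
    intro a b hab
    have h1 : nd ((a:ℝ)) = 0 := nd_int a
    have h2 : nd (α * (a:ℝ)) = |(a:ℝ) * α + b| := by
      have he : α * (a:ℝ) = ((a:ℝ) * α + b) - (b:ℤ) := by push_cast; ring
      rw [he, nd_sub_int]
      exact nd_eq_abs (by linarith)
    have h3 := hL (a:ℝ) (by rw [h1]; exact hδ.le) (by rw [h2]; exact hab.le)
    rw [hnd_eta, h1, h2, max_eq_right (abs_nonneg _)] at h3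
    exact h3
  have hCore : ∀ a b a' b' : ℤ, ∀ x y : ℤ,
      |(x:ℝ) * ((a:ℝ) * α + b) + (y:ℝ) * ((a':ℝ) * α + b')| ≤ δ →
      |(x:ℝ) * η a + (y:ℝ) * η a'| < 1/2 →
      |(x:ℝ) * η a + (y:ℝ) * η a'| ≤ C * |(x:ℝ) * ((a:ℝ) * α + b) + (y:ℝ) * ((a':ℝ) * α + b')| := by
    intro a b a' b' x y hsum hsmall
    set s : ℝ := ((x * a + y * a' : ℤ) : ℝ) with hsdef
    have h1 : nd s = 0 := nd_int _
    have h2 : nd (α * s) = |(x:ℝ) * ((a:ℝ)*α+b) + (y:ℝ)*((a':ℝ)*α+b')| := by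
      have he : α * s = ((x:ℝ) * ((a:ℝ)*α+b) + (y:ℝ)*((a':ℝ)*α+b')) - ((x*b + y*b' : ℤ):ℝ) := by
        rw [hsdef]; push_cast; ring
      rw [he, nd_sub_int]
      exact nd_eq_abs (lt_of_le_of_lt hsum (by linarith))
    have h3 : nd (β * s) = |(x:ℝ) * η a + (y:ℝ) * η a'| := by
      have he : β * s = ((x:ℝ) * η a + (y:ℝ) * η a') + ((x * round (β * (a:ℝ)) + y * round (β * (a':ℝ)) : ℤ):ℝ) := by
        rw [hsdef, hηdef]; push_cast; ring
      rw [he, nd_add_int]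
      exact nd_eq_abs hsmall
    have h4 := hL s (by rw [h1]; exact hδ.le) (by rw [h2]; exact hsum)
    rw [h3, h1, h2, max_eq_right (abs_nonneg _)] at h4
    exact h4
  have hExch : ∀ a b a' b' : ℤ, 0 < |(a:ℝ)*α+b| → |(a:ℝ)*α+b| < δ →
      0 < |(a':ℝ)*α+b'| → |(a':ℝ)*α+b'| < δ →
      |η a - (((a:ℝ)*α+b) / ((a':ℝ)*α+b')) * η a'| ≤ 16 * C^2 * |(a:ℝ)*α+b| * |(a':ℝ)*α+b'| := by
    intro a b a' b' h1 h2 h3 h4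
    exact exch hC hCδ (hEta a b h2) (hEta a' b' h4)
      (fun x y hxy hsm => hCore a b a' b' x y hxy hsm) h1 h2 h3 h4
  -- a fixed good pair
  obtain ⟨a₁, b₁, hg₁⟩ := dense_pair hα (δ/2) δ (by linarith)
  obtain ⟨g₁, hg₁def⟩ : ∃ g₁ : ℝ, g₁ = (a₁:ℝ)*α+b₁ := ⟨_, rfl⟩
  rw [← hg₁def] at hg₁
  have hg₁pos : 0 < g₁ := lt_trans (by linarith) hg₁.1
  have hg₁0 : 0 < |g₁| := abs_pos.2 (ne_of_gt hg₁pos)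
  have hg₁δ : |g₁| < δ := by rw [abs_of_pos hg₁pos]; exact hg₁.2
  obtain ⟨m, hmdef⟩ : ∃ m : ℝ, m = η a₁ / g₁ := ⟨_, rfl⟩
  -- every good pair has fractional part m * g
  have hm : ∀ a b : ℤ, 0 < |(a:ℝ)*α+b| → |(a:ℝ)*α+b| < δ → η a = m * ((a:ℝ)*α+b) := by
    intro a b hg0 hgδ
    obtain ⟨g, hgdef⟩ : ∃ g : ℝ, g = (a:ℝ)*α+b := ⟨_, rfl⟩
    rw [← hgdef] at hg0 hgδ ⊢
    have key : ∀ ε : ℝ, 0 < ε → |η a * g₁ - η a₁ * g| ≤ ε := by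
      intro ε hε
      obtain ⟨K, hKdef⟩ : ∃ K : ℝ, K = 16 * C^2 * |g| * |g₁| := ⟨_, rfl⟩
      have hK : 0 ≤ K := by rw [hKdef]; positivity
      obtain ⟨e₂, he₂def⟩ : ∃ e₂ : ℝ, e₂ = min δ (ε / (2*K + 1)) := ⟨_, rfl⟩
      have he₂pos : 0 < e₂ := by
        rw [he₂def]; apply lt_min hδ; positivity
      obtain ⟨a', b', hg'⟩ := dense_pair hα (e₂/2) e₂ (by linarith)
      obtain ⟨g', hg'def⟩ : ∃ g' : ℝ, g' = (a':ℝ)*α+b' := ⟨_, rfl⟩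
      rw [← hg'def] at hg'
      have hg'pos : 0 < g' := lt_trans (by linarith) hg'.1
      have hg'0 : 0 < |g'| := abs_pos.2 (ne_of_gt hg'pos)
      have hg'δ : |g'| < δ := by
        rw [abs_of_pos hg'pos]
        exact lt_of_lt_of_le hg'.2 (by rw [he₂def]; exact min_le_left _ _)
      have hg'ε : |g'| ≤ ε / (2*K + 1) := by
        rw [abs_of_pos hg'pos]
        exact le_of_lt (lt_of_lt_of_le hg'.2 (by rw [he₂def]; exact min_le_right _ _))
      have e1 := hExch a b a' b' (hgdef ▸ hg0) (hgdef ▸ hgδ) (hg'def ▸ hg'0) (hg'def ▸ hg'δ)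
      have e2 := hExch a₁ b₁ a' b' (hg₁def ▸ hg₁0) (hg₁def ▸ hg₁δ) (hg'def ▸ hg'0) (hg'def ▸ hg'δ)
      rw [← hgdef, ← hg'def] at e1
      rw [← hg₁def, ← hg'def] at e2
      have hg'ne : g' ≠ 0 := ne_of_gt hg'pos
      have hid : η a * g₁ - η a₁ * g =
          g₁ * (η a - (g/g') * η a') - g * (η a₁ - (g₁/g') * η a') := by
        field_simp
        ring
      calc |η a * g₁ - η a₁ * g|
          ≤ |g₁ * (η a - (g/g') * η a')| + |g * (η a₁ - (g₁/g') * η a')| := by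
            rw [hid]; exact abs_sub _ _
        _ ≤ |g₁| * (16 * C^2 * |g| * |g'|) + |g| * (16 * C^2 * |g₁| * |g'|) := by
            rw [abs_mul, abs_mul]
            exact add_le_add (mul_le_mul_of_nonneg_left e1 (abs_nonneg _))
              (mul_le_mul_of_nonneg_left e2 (abs_nonneg _))
        _ = 2 * K * |g'| := by rw [hKdef]; ring
        _ ≤ 2 * K * (ε / (2*K + 1)) := by
            apply mul_le_mul_of_nonneg_left hg'ε (by positivity)
        _ ≤ ε := by
            have hu : ε / (2*K+1) * (2*K+1) = ε := div_mul_cancel₀ ε (by positivity)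
            have hu0 : 0 ≤ ε / (2*K+1) := by positivity
            nlinarith [hu, hu0, hK]
    have h0 : η a * g₁ - η a₁ * g = 0 := by
      have habs : |η a * g₁ - η a₁ * g| ≤ 0 := by
        by_contra hlt
        push_neg at hlt
        have := key (|η a * g₁ - η a₁ * g| / 2) (by linarith)
        linarith
      have := abs_nonneg (η a * g₁ - η a₁ * g)
      rw [abs_eq_zero.1 (le_antisymm habs this)]
    have hg₁ne : g₁ ≠ 0 := ne_of_gt hg₁pos
    rw [hmdef]
    field_simp
    linarith [h0]
  have hmC : |m| ≤ C := by
    have h1 : |η a₁| ≤ C * |g₁| := by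
      have h2 := hEta a₁ b₁ (hg₁def ▸ hg₁δ)
      rw [← hg₁def] at h2
      exact h2
    rw [hmdef, abs_div, div_le_iff₀ hg₁0]
    calc |η a₁| ≤ C * |g₁| := h1
      _ = C * |g₁| := rfl
  -- extension to all integers
  have hT : ∀ a : ℤ, ∃ z : ℤ, β * a - m * (α * a) + m * round (α * (a:ℝ)) = (z:ℝ) := by
    intro a
    obtain ⟨T, hTdef⟩ : ∃ T : ℝ, T = β * a - m * (α * a) + m * round (α * (a:ℝ)) := ⟨_, rfl⟩
    obtain ⟨w, hwdef⟩ : ∃ w : ℝ, w = α * a - round (α * (a:ℝ)) := ⟨_, rfl⟩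
    have key : ∀ ε : ℝ, 0 < ε → nd T ≤ C * ε := by
      intro ε hε
      obtain ⟨e₂, he₂def⟩ : ∃ e₂ : ℝ, e₂ = min δ ε := ⟨_, rfl⟩
      have he₂pos : 0 < e₂ := by rw [he₂def]; exact lt_min hδ hε
      obtain ⟨a', b', hg'⟩ := dense_pair hα (e₂/2) e₂ (by linarith)
      obtain ⟨g', hg'def⟩ : ∃ g' : ℝ, g' = (a':ℝ)*α+b' := ⟨_, rfl⟩
      rw [← hg'def] at hg'
      have hg'pos : 0 < g' := lt_trans (by linarith) hg'.1
      have hg'ne : g' ≠ 0 := ne_of_gt hg'pos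
      have hg'0 : 0 < |g'| := abs_pos.2 hg'ne
      have hg'δ : |g'| < δ := by
        rw [abs_of_pos hg'pos]
        exact lt_of_lt_of_le hg'.2 (by rw [he₂def]; exact min_le_left _ _)
      have hg'ε : g' ≤ ε :=
        le_of_lt (lt_of_lt_of_le hg'.2 (by rw [he₂def]; exact min_le_right _ _))
      have hg'lt : g' < δ := by rwa [abs_of_pos hg'pos] at hg'δ
      have hma' : η a' = m * g' := by
        have := hm a' b' (by rw [← hg'def]; exact hg'0) (by rw [← hg'def]; exact hg'δ)
        rw [← hg'def] at this
        exact this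
      obtain ⟨y, hydef⟩ : ∃ y : ℤ, y = round (w / g') := ⟨_, rfl⟩
      have hwy : |w - y * g'| ≤ g' / 2 := by
        have he : w - y * g' = g' * (w/g' - round (w/g')) := by
          rw [hydef]; field_simp
        rw [he, abs_mul, abs_of_pos hg'pos]
        calc g' * |w/g' - round (w/g')| ≤ g' * (1/2) :=
              mul_le_mul_of_nonneg_left (abs_sub_round _) hg'pos.le
          _ = g'/2 := by ring
      obtain ⟨s, hsdef⟩ : ∃ s : ℝ, s = ((a - y * a' : ℤ):ℝ) := ⟨_, rfl⟩
      have h1 : nd s = 0 := by rw [hsdef]; exact nd_int _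
      have h2 : nd (α * s) ≤ g' / 2 := by
        have he : α * s = (w - y * g') + ((round (α * (a:ℝ)) + y * b' : ℤ):ℝ) := by
          rw [hsdef, hwdef, hg'def]; push_cast; ring
        rw [he, nd_add_int]
        rw [nd_eq_abs (lt_of_le_of_lt hwy (by linarith))]
        exact hwy
      have h3 := hL s (by rw [h1]; exact hδ.le) (h2.trans (by linarith))
      rw [h1] at h3
      have h4 : nd (β * s) ≤ C * (g' / 2) := by
        refine h3.trans ?_
        rw [max_eq_right (nd_nonneg _)]
        exact mul_le_mul_of_nonneg_left h2 hC.le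
      -- identify T up to an integer
      have hβs : β * s = β * a - y * round (β * ((a':ℤ):ℝ)) - y * (m * g') := by
        have hη2 : β * ((a':ℤ):ℝ) - round (β * ((a':ℤ):ℝ)) = m * g' := by
          rw [hηdef] at hma'; exact hma'
        rw [hsdef]
        push_cast
        linear_combination (-(y:ℝ)) * hη2
      obtain ⟨z, hzdef⟩ : ∃ z : ℤ, z = round (β * s) + y * round (β * ((a':ℤ):ℝ)) := ⟨_, rfl⟩
      have hTz : T - z = (β * s - round (β * s)) + m * (y * g' - w) := by
        rw [hTdef, hzdef, hwdef]
        push_cast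
        linear_combination -hβs
      have h5 : |m * ((y:ℝ) * g' - w)| ≤ C * (g'/2) := by
        rw [abs_mul]
        have habs2 : |(y:ℝ) * g' - w| ≤ g'/2 := by rw [abs_sub_comm]; exact hwy
        exact mul_le_mul hmC habs2 (abs_nonneg _) hC.le
      have hTz2 : |T - (z:ℝ)| ≤ C * ε := by
        rw [hTz]
        have h7 := abs_add_le (β * s - ↑(round (β * s))) (m * ((y:ℝ) * g' - w))
        have h6 : |β * s - ↑(round (β * s))| = nd (β * s) := rfl
        have h8 : C * g' ≤ C * ε := mul_le_mul_of_nonneg_left hg'ε hC.le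
        rw [h6] at h7
        calc |β * s - ↑(round (β * s)) + m * (↑y * g' - w)|
            ≤ nd (β * s) + |m * ((y:ℝ) * g' - w)| := h7
          _ ≤ C * ε := by linarith
      exact (nd_le T z).trans hTz2
    have hndT : nd T = 0 := by
      by_contra hne
      have hpos : 0 < nd T := lt_of_le_of_ne (nd_nonneg T) (Ne.symm hne)
      have hkey2 := key (nd T / (2 * C)) (by positivity)
      have hhalf : C * (nd T / (2 * C)) = nd T / 2 := by
        field_simp
      rw [hhalf] at hkey2
      linarith
    obtain ⟨z, hz⟩ := nd_eq_zero_iff.1 hndT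
    exact ⟨z, by rw [← hTdef]; exact hz⟩
  -- m is an integer
  obtain ⟨a₂, b₂, hg₂⟩ := dense_pair hα (1/4) (1/2) (by norm_num)
  obtain ⟨g₂, hg₂def⟩ : ∃ g₂ : ℝ, g₂ = (a₂:ℝ)*α+b₂ := ⟨_, rfl⟩
  rw [← hg₂def] at hg₂
  have hr1 : round (α * ((a₂:ℤ):ℝ)) = -b₂ := by
    have he : α * ((a₂:ℤ):ℝ) = g₂ + ((-b₂ : ℤ):ℝ) := by rw [hg₂def]; push_cast; ring
    rw [he, round_add_intCast]
    have : round g₂ = 0 := round_eq_zero_iff.2 ⟨by linarith [hg₂.1], by linarith [hg₂.2]⟩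
    rw [this]; simp
  have hr2 : round (α * ((2*a₂:ℤ):ℝ)) = 1 - 2*b₂ := by
    have he : α * ((2*a₂:ℤ):ℝ) = (2*g₂ - 1) + ((1 - 2*b₂ : ℤ):ℝ) := by
      rw [hg₂def]; push_cast; ring
    rw [he, round_add_intCast]
    have : round (2*g₂ - 1) = 0 :=
      round_eq_zero_iff.2 ⟨by linarith [hg₂.1], by linarith [hg₂.2]⟩
    rw [this]; simp
  obtain ⟨z₁, hz₁⟩ := hT a₂
  obtain ⟨z₂, hz₂⟩ := hT (2*a₂)
  rw [hr1] at hz₁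
  rw [hr2] at hz₂
  have hm_int : m = ((z₂ - 2*z₁ : ℤ):ℝ) := by
    push_cast at hz₁ hz₂ ⊢
    nlinarith [hz₁, hz₂]
  obtain ⟨z₃, hz₃⟩ := hT 1
  refine ⟨z₂ - 2*z₁, z₃ - (z₂ - 2*z₁) * round α, ?_⟩
  rw [hm_int] at hz₃
  have h1 : ((1:ℤ):ℝ) = 1 := by norm_num
  rw [h1, mul_one, mul_one] at hz₃
  push_cast at hz₃ ⊢
  linarith [hz₃]


end ExpAux


open ExpAux in
theorem exponents_linear_torus_flow (α : ℝ) (hα : Irrational α)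
    (p : UnitAddCircle × UnitAddCircle) :
    expGroup (fun t : ℝ =>
        (p.1 + ((α * t : ℝ) : UnitAddCircle), p.2 + ((t : ℝ) : UnitAddCircle)))
      = {β : ℝ | ∃ m n : ℤ, β = m * α + n} := by
  ext β
  simp only [expGroup, Set.mem_setOf_eq]
  constructor
  · intro hβ
    apply ExpAux.hard α β hα
    have step1 : ∀ u : ℕ → ℝ, Tendsto (fun i => nd (u i)) atTop (𝓝 0) →
        Tendsto (fun i => nd (α * u i)) atTop (𝓝 0) →
        Tendsto (fun i => nd (β * u i)) atTop (𝓝 0) := by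
      intro u hu hau
      set v : ℕ → ℝ := fun i => if Even i then u (i / 2) else 0 with hv
      have hv2 : ∀ i, v (2 * i) = u i := by
        intro i
        have h1 : Even (2 * i) := even_two_mul i
        have h2 : 2 * i / 2 = i := Nat.mul_div_cancel_left i (by norm_num)
        simp [hv, h1, h2]
      have hv21 : ∀ i, v (2 * i + 1) = 0 := by
        intro i
        have h1 : ¬ Even (2 * i + 1) := by
          rw [Nat.even_add_one]
          simp [even_two_mul]
        simp [hv, h1]
      have hhalf : Tendsto (fun i : ℕ => i / 2) atTop atTop :=
        tendsto_atTop_atTop.mpr fun b => ⟨2 * b, fun a ha => by omega⟩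
      have hcv : ∀ c : ℝ, Tendsto (fun i => nd (c * u i)) atTop (𝓝 0) →
          Tendsto (fun i => nd (c * v i)) atTop (𝓝 0) := by
        intro c hc
        have hcomp : Tendsto (fun i : ℕ => nd (c * u (i / 2))) atTop (𝓝 0) := hc.comp hhalf
        refine squeeze_zero (fun i => nd_nonneg _) (g := fun i : ℕ => nd (c * u (i / 2))) ?_ hcomp
        intro i
        by_cases h : Even i
        · simp only [hv, if_pos h]
          exact le_refl _
        · simp only [hv, if_neg h, mul_zero, nd_zero]
          exact nd_nonneg _
      have h1 : Tendsto (fun i => ((α * v i : ℝ) : UnitAddCircle)) atTop (𝓝 0) :=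
        tendsto_coe_iff.2 (hcv α hau)
      have h2 : Tendsto (fun i => ((v i : ℝ) : UnitAddCircle)) atTop (𝓝 0) := by
        refine tendsto_coe_iff.2 ?_
        have := hcv 1 (by simpa using hu)
        simpa using this
      have hfv : Tendsto (fun i =>
          (p.1 + ((α * v i : ℝ) : UnitAddCircle), p.2 + ((v i : ℝ) : UnitAddCircle)))
          atTop (𝓝 (p.1, p.2)) := by
        have hA : Tendsto (fun i => p.1 + ((α * v i : ℝ) : UnitAddCircle)) atTop (𝓝 p.1) := by
          have := tendsto_const_nhds (x := p.1) (f := atTop (α := ℕ)) |>.add h1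
          simpa using this
        have hB : Tendsto (fun i => p.2 + ((v i : ℝ) : UnitAddCircle)) atTop (𝓝 p.2) := by
          have := tendsto_const_nhds (x := p.2) (f := atTop (α := ℕ)) |>.add h2
          simpa using this
        exact hA.prodMk_nhds hB
      obtain ⟨ξ, hξ⟩ := hβ v ⟨(p.1, p.2), hfv⟩
      have h2i : Tendsto (fun i : ℕ => 2 * i) atTop atTop :=
        tendsto_atTop_atTop.mpr fun b => ⟨b, fun a ha => by omega⟩
      have h2i1 : Tendsto (fun i : ℕ => 2 * i + 1) atTop atTop :=
        tendsto_atTop_atTop.mpr fun b => ⟨b, fun a ha => by omega⟩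
      have ho : Tendsto (fun i : ℕ => ((β * v (2 * i + 1) : ℝ) : UnitAddCircle)) atTop (𝓝 ξ) :=
        hξ.comp h2i1
      have hξ0 : ξ = 0 := by
        have hco : Tendsto (fun _ : ℕ => ((β * (0:ℝ) : ℝ) : UnitAddCircle)) atTop (𝓝 ξ) := by
          have : (fun i : ℕ => ((β * v (2 * i + 1) : ℝ) : UnitAddCircle))
              = fun _ : ℕ => ((β * (0:ℝ) : ℝ) : UnitAddCircle) := by
            funext i; rw [hv21]
          rwa [this] at ho
        have hzero : ((β * (0:ℝ) : ℝ) : UnitAddCircle) = 0 := by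
          norm_num
        rw [hzero] at hco
        exact (tendsto_nhds_unique hco tendsto_const_nhds)
      rw [hξ0] at hξ
      have he : Tendsto (fun i : ℕ => ((β * v (2 * i) : ℝ) : UnitAddCircle)) atTop (𝓝 0) :=
        hξ.comp h2i
      have he' : Tendsto (fun i : ℕ => ((β * u i : ℝ) : UnitAddCircle)) atTop (𝓝 0) := by
        have : (fun i : ℕ => ((β * v (2 * i) : ℝ) : UnitAddCircle))
            = fun i : ℕ => ((β * u i : ℝ) : UnitAddCircle) := by
          funext i; rw [hv2]
        rwa [this] at he
      exact tendsto_coe_iff.1 he'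
    intro ε hε
    by_contra hcon
    push_neg at hcon
    choose sf hs1 hs2 hs3 using fun k : ℕ => hcon (1/(k+1)) (by positivity)
    have hlim : Tendsto (fun k : ℕ => 1/((k:ℝ)+1)) atTop (𝓝 0) :=
      tendsto_one_div_add_atTop_nhds_zero_nat
    have h1 : Tendsto (fun k => nd (sf k)) atTop (𝓝 0) :=
      squeeze_zero (fun k => nd_nonneg _) (fun k => (hs1 k).le) hlim
    have h2 : Tendsto (fun k => nd (α * sf k)) atTop (𝓝 0) :=
      squeeze_zero (fun k => nd_nonneg _) (fun k => (hs2 k).le) hlim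
    have h3 := step1 sf h1 h2
    have hge : ε ≤ 0 := ge_of_tendsto' h3 fun k => hs3 k
    linarith
  · rintro ⟨m, n, rfl⟩
    rintro t ⟨x, hx⟩
    have h1 : Tendsto (fun i => p.1 + ((α * t i : ℝ) : UnitAddCircle)) atTop (𝓝 x.1) :=
      (continuous_fst.tendsto x).comp hx
    have h2 : Tendsto (fun i => p.2 + ((t i : ℝ) : UnitAddCircle)) atTop (𝓝 x.2) :=
      (continuous_snd.tendsto x).comp hx
    have hA : Tendsto (fun i => ((α * t i : ℝ) : UnitAddCircle)) atTop (𝓝 (-p.1 + x.1)) := by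
      have h := ((continuous_add_left (-p.1)).tendsto x.1).comp h1
      have he : ((fun b => -p.1 + b) ∘ fun i => p.1 + ((α * t i : ℝ) : UnitAddCircle))
          = fun i => ((α * t i : ℝ) : UnitAddCircle) := by
        funext i; simp [Function.comp]
      rwa [he] at h
    have hB : Tendsto (fun i => ((t i : ℝ) : UnitAddCircle)) atTop (𝓝 (-p.2 + x.2)) := by
      have h := ((continuous_add_left (-p.2)).tendsto x.2).comp h2
      have he : ((fun b => -p.2 + b) ∘ fun i => p.2 + ((t i : ℝ) : UnitAddCircle))
          = fun i => ((t i : ℝ) : UnitAddCircle) := by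
        funext i; simp [Function.comp]
      rwa [he] at h
    refine ⟨m • (-p.1 + x.1) + n • (-p.2 + x.2), ?_⟩
    have hco : ∀ r s : ℝ, (((m : ℝ) * r + (n : ℝ) * s : ℝ) : UnitAddCircle)
        = m • (r : UnitAddCircle) + n • (s : UnitAddCircle) := by
      intro r s
      have hsplit : (((m : ℝ) * r + (n : ℝ) * s : ℝ) : UnitAddCircle)
          = (((m : ℝ) * r : ℝ) : UnitAddCircle) + (((n : ℝ) * s : ℝ) : UnitAddCircle) := rfl
      rw [hsplit, ← zsmul_eq_mul, ← zsmul_eq_mul,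
        QuotientAddGroup.mk_zsmul, QuotientAddGroup.mk_zsmul]
    have heq : (fun i => (((↑m * α + ↑n) * t i : ℝ) : UnitAddCircle)) =
        fun i => m • ((α * t i : ℝ) : UnitAddCircle) + n • ((t i : ℝ) : UnitAddCircle) := by
      funext i
      rw [← hco]
      congr 1
      push_cast
      ring
    rw [heq]
    exact (((continuous_zsmul m).tendsto _).comp hA).add
      (((continuous_zsmul n).tendsto _).comp hB)
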